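/- Let n ≥ 2 be an integer and set c = ( ∫₀^π (sin t)^{n−1} dt )^{−1} and γ_n = ∫_{−π/2}^{π/2} (cos t)^{n−1} dt. Define V(r) = c ∫₀^r (sin t)^{n−1} dt and A(r) = c (sin r)^{n−1} for r ∈ (0, π), so that V is a diffeomorphism from (0,π) onto (0,1), and let ψ = A ∘ V^{−1} : (0,1) → ℝ. Then ψ(β) (1 + (ψ'(β)/(n−1))²)^{(n−1)/2} = 1/γ_n for all β ∈ (0,1). -/

import Mathlib

open Real

theorem model_profile_first_order_equation
    (n : ℕ) (hn : 2 ≤ n) (c γ : ℝ)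
    (hc : c = (∫ t in (0 : ℝ)..Real.pi, (Real.sin t) ^ (n - 1))⁻¹)
    (hγ : γ = ∫ t in (-(Real.pi / 2))..(Real.pi / 2), (Real.cos t) ^ (n - 1))
    (V A ψ : ℝ → ℝ)
    (hV : V = fun r => c * ∫ t in (0 : ℝ)..r, (Real.sin t) ^ (n - 1))
    (hA : A = fun r => c * (Real.sin r) ^ (n - 1))
    (hψ : ∀ r ∈ Set.Ioo (0 : ℝ) Real.pi, ψ (V r) = A r) :
    ∀ β ∈ Set.Ioo (0 : ℝ) 1,
      ψ β * (1 + (deriv ψ β / ((n : ℝ) - 1)) ^ 2) ^ (((n : ℝ) - 1) / 2) = 1 / γ := by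
  intro β hβ
  have hcontf : Continuous fun t : ℝ => Real.sin t ^ (n - 1) :=
    Real.continuous_sin.pow _
  -- positivity of the total integral
  have hIpos : 0 < ∫ t in (0 : ℝ)..Real.pi, (Real.sin t) ^ (n - 1) := by
    apply intervalIntegral.intervalIntegral_pos_of_pos_on
      (hcontf.intervalIntegrable _ _)
    · intro x hx
      exact pow_pos (Real.sin_pos_of_pos_of_lt_pi hx.1 hx.2) _
    · exact Real.pi_pos
  have hcpos : 0 < c := by rw [hc]; positivity
  have hcne : c ≠ 0 := ne_of_gt hcpos
  -- γ equals the total integral, hence c = 1/γ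
  have hγI : γ = ∫ t in (0 : ℝ)..Real.pi, (Real.sin t) ^ (n - 1) := by
    rw [hγ]
    have := intervalIntegral.integral_comp_add_right
      (a := -(Real.pi / 2)) (b := Real.pi / 2)
      (fun t => Real.sin t ^ (n - 1)) (Real.pi / 2)
    simp only [Real.sin_add_pi_div_two] at this
    rw [show -(Real.pi/2) + Real.pi/2 = (0:ℝ) by ring,
      show Real.pi/2 + Real.pi/2 = Real.pi by ring] at this
    exact this
  have hγpos : 0 < γ := hγI ▸ hIpos
  -- derivative of V
  have hVd : ∀ r : ℝ, HasStrictDerivAt V (c * Real.sin r ^ (n - 1)) r := by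
    intro r
    rw [hV]
    exact (hcontf.integral_hasStrictDerivAt 0 r).const_mul c
  have hVcont : Continuous V :=
    continuous_iff_continuousAt.2 fun r => (hVd r).hasDerivAt.continuousAt
  -- find r with V r = β
  have hV0 : V 0 = 0 := by simp [hV]
  have hVπ : V Real.pi = 1 := by
    rw [hV, hc]
    exact inv_mul_cancel₀ (ne_of_gt hIpos)
  have hsub : Set.Ioo (0 : ℝ) 1 ⊆ V '' Set.Ioo 0 Real.pi := by
    have := intermediate_value_Ioo (le_of_lt Real.pi_pos) hVcont.continuousOn
    rwa [hV0, hVπ] at this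
  obtain ⟨r, hr, hVr⟩ := hsub hβ
  have hs : 0 < Real.sin r := Real.sin_pos_of_pos_of_lt_pi hr.1 hr.2
  have hsne : Real.sin r ≠ 0 := ne_of_gt hs
  have hV'pos : 0 < c * Real.sin r ^ (n - 1) := by positivity
  have hV'ne : c * Real.sin r ^ (n - 1) ≠ 0 := ne_of_gt hV'pos
  -- local inverse of V at r
  set g : ℝ → ℝ := (hVd r).localInverse V _ r hV'ne with hg
  have hgβ : g β = r := by
    have := ((hVd r).hasStrictFDerivAt_equiv hV'ne).localInverse_apply_image
    rw [← hVr]; exact this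
  have hgd : HasStrictDerivAt g (c * Real.sin r ^ (n - 1))⁻¹ β := by
    have := (hVd r).to_localInverse (hf' := hV'ne)
    rwa [hVr] at this
  -- ψ agrees with A ∘ g near β
  have hev : ψ =ᶠ[nhds β] fun y => A (g y) := by
    have h1 : ∀ᶠ y in nhds β, V (g y) = y := by
      have := ((hVd r).hasStrictFDerivAt_equiv hV'ne).eventually_right_inverse
      rwa [hVr] at this
    have h2 : ∀ᶠ y in nhds β, g y ∈ Set.Ioo (0 : ℝ) Real.pi := by
      have hgc : ContinuousAt g β := by
        have := ((hVd r).hasStrictFDerivAt_equiv hV'ne).localInverse_continuousAt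
        rwa [hVr] at this
      have : Set.Ioo (0 : ℝ) Real.pi ∈ nhds (g β) := by
        rw [hgβ]; exact isOpen_Ioo.mem_nhds hr
      exact hgc this
    filter_upwards [h1, h2] with y hy1 hy2
    calc ψ y = ψ (V (g y)) := by rw [hy1]
    _ = A (g y) := hψ _ hy2
  -- derivative of ψ at β
  have hAd : HasDerivAt A (c * (((n : ℝ) - 1) * Real.sin r ^ (n - 2) * Real.cos r)) r := by
    rw [hA]
    have := ((Real.hasDerivAt_sin r).pow (n - 1)).const_mul c
    rw [show n - 1 - 1 = n - 2 by omega,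
      Nat.cast_sub (by omega : 1 ≤ n), Nat.cast_one] at this
    exact this
  have hψd : HasDerivAt ψ
      (c * (((n : ℝ) - 1) * Real.sin r ^ (n - 2) * Real.cos r) *
        (c * Real.sin r ^ (n - 1))⁻¹) β := by
    have hcomp : HasDerivAt (fun y => A (g y))
        (c * (((n : ℝ) - 1) * Real.sin r ^ (n - 2) * Real.cos r) *
          (c * Real.sin r ^ (n - 1))⁻¹) β := by
      have := HasDerivAt.comp β (hgβ ▸ hAd) hgd.hasDerivAt
      simpa only [Function.comp_def, hgβ] using this
    exact hcomp.congr_of_eventuallyEq hev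
  have hderiv : deriv ψ β = ((n : ℝ) - 1) * (Real.cos r / Real.sin r) := by
    rw [hψd.deriv]
    have hpow : Real.sin r ^ (n - 1) = Real.sin r ^ (n - 2) * Real.sin r := by
      rw [← pow_succ]; congr 1; omega
    rw [hpow]
    field_simp
  have hn1 : ((n : ℝ) - 1) ≠ 0 := by
    have : (2 : ℝ) ≤ (n : ℝ) := by exact_mod_cast hn
    linarith
  have hψβ : ψ β = c * Real.sin r ^ (n - 1) := by
    rw [← hVr, hψ r hr, hA]
  -- main computation
  have hbase : 1 + (deriv ψ β / ((n : ℝ) - 1)) ^ 2 = (Real.sin r ^ 2)⁻¹ := by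
    rw [hderiv]
    have h1 : ((n:ℝ)-1) * (Real.cos r / Real.sin r) / ((n:ℝ)-1)
        = Real.cos r / Real.sin r := by
      field_simp
    have h3 : 1 + Real.cos r ^ 2 / Real.sin r ^ 2
        = (Real.sin r ^ 2 + Real.cos r ^ 2) / Real.sin r ^ 2 := by
      field_simp
    rw [h1, div_pow, h3, Real.sin_sq_add_cos_sq, one_div]
  rw [hψβ, hbase]
  have hrpow : ((Real.sin r ^ 2)⁻¹ : ℝ) ^ (((n : ℝ) - 1) / 2)
      = Real.sin r ^ (-((n : ℝ) - 1)) := by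
    have h2 : ((Real.sin r ^ 2)⁻¹ : ℝ) = Real.sin r ^ (-2 : ℝ) := by
      rw [Real.rpow_neg (le_of_lt hs)]
      congr 1
      rw [← Real.rpow_natCast (Real.sin r) 2]
      norm_num
    rw [h2, ← Real.rpow_mul (le_of_lt hs)]
    congr 1
    ring
  have hnat : (Real.sin r ^ (n - 1) : ℝ) = Real.sin r ^ ((n:ℝ) - 1) := by
    rw [← Real.rpow_natCast (Real.sin r) (n - 1),
      Nat.cast_sub (by omega : 1 ≤ n), Nat.cast_one]
  rw [hrpow, hnat, mul_assoc, ← Real.rpow_add hs, add_neg_cancel,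
    Real.rpow_zero, mul_one, hc, hγI, one_div]
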